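/- Let K be a commutative ring with identity and m ≥ 2. Then H^m(K) equals the subgroup of H(K) generated by {(h∘g)·h^{-1} : g ∈ N^{m−1}(K), h ∈ H(K)}, and also equals the subgroup of H(K) generated by the smaller set {((1+x)∘g)·(1+x)^{-1} : g ∈ N^{m−1}(K)}. -/

import Mathlib

open PowerSeries Finset

namespace RiordanPaper

variable {K : Type*} [CommRing K]

noncomputable def comp (f g : PowerSeries K) : PowerSeries K :=
  PowerSeries.mk fun n => ∑ d ∈ Finset.range (n + 1), coeff d f * coeff n (g ^ d)

lemma coeff_comp (f g : PowerSeries K) (n : ℕ) :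
    coeff n (comp f g) = ∑ d ∈ Finset.range (n + 1), coeff d f * coeff n (g ^ d) := by
  simp [comp]

lemma coeff_pow_eq_zero {g : PowerSeries K} (hg : constantCoeff g = 0) {n d : ℕ}
    (h : n < d) : coeff n (g ^ d) = 0 := by
  have hdvd : (X : PowerSeries K) ^ d ∣ g ^ d :=
    pow_dvd_pow_of_dvd (PowerSeries.X_dvd_iff.2 hg) d
  exact (PowerSeries.X_pow_dvd_iff.1 hdvd) n h

lemma coeff_comp_of_lt {g : PowerSeries K} (hg : constantCoeff g = 0)
    (f : PowerSeries K) {n N : ℕ} (hn : n < N) :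
    coeff n (comp f g) = ∑ d ∈ Finset.range N, coeff d f * coeff n (g ^ d) := by
  rw [coeff_comp]
  apply Finset.sum_subset
  · intro d hd
    simp only [Finset.mem_range] at hd ⊢
    omega
  · intro d _ hd'
    simp only [Finset.mem_range] at hd'
    rw [coeff_pow_eq_zero hg (by omega), mul_zero]

lemma coeff_eval₂ {g : PowerSeries K} (hg : constantCoeff g = 0)
    (P : Polynomial K) (n : ℕ) :
    coeff n (Polynomial.eval₂ C g P)
      = ∑ d ∈ Finset.range (n + 1), P.coeff d * coeff n (g ^ d) := by
  classical
  have h1 : P.natDegree < max (n + 1) (P.natDegree + 1) :=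
    lt_of_lt_of_le (Nat.lt_succ_self _) (le_max_right _ _)
  rw [Polynomial.eval₂_eq_sum_range' C h1 g, map_sum]
  have h2 : ∀ d ∈ Finset.range (max (n + 1) (P.natDegree + 1)),
      coeff n (C (P.coeff d) * g ^ d) = P.coeff d * coeff n (g ^ d) := fun d _ => by
    rw [coeff_C_mul]
  rw [Finset.sum_congr rfl h2]
  symm
  apply Finset.sum_subset
  · intro d hd
    simp only [Finset.mem_range] at hd ⊢
    omega
  · intro d _ hd'
    simp only [Finset.mem_range] at hd'
    rw [coeff_pow_eq_zero hg (by omega), mul_zero]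

lemma coeff_comp_eq_eval₂_trunc {g : PowerSeries K} (hg : constantCoeff g = 0)
    (f : PowerSeries K) {n N : ℕ} (hn : n < N) :
    coeff n (comp f g) = coeff n (Polynomial.eval₂ C g (trunc N f)) := by
  rw [coeff_eval₂ hg, coeff_comp]
  apply Finset.sum_congr rfl
  intro d hd
  simp only [Finset.mem_range] at hd
  rw [PowerSeries.coeff_trunc, if_pos (by omega)]

lemma mul_comp {g : PowerSeries K} (hg : constantCoeff g = 0) (f₁ f₂ : PowerSeries K) :
    comp (f₁ * f₂) g = comp f₁ g * comp f₂ g := by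
  ext n
  have key : coeff n (comp (f₁ * f₂) g)
      = coeff n (Polynomial.eval₂ C g (trunc (n + 1) f₁ * trunc (n + 1) f₂)) := by
    rw [coeff_eval₂ hg, coeff_comp]
    apply Finset.sum_congr rfl
    intro d hd
    simp only [Finset.mem_range] at hd
    congr 1
    rw [Polynomial.coeff_mul, PowerSeries.coeff_mul]
    apply Finset.sum_congr rfl
    intro ab hab
    replace hab := Finset.HasAntidiagonal.mem_antidiagonal.mp hab
    rw [PowerSeries.coeff_trunc, PowerSeries.coeff_trunc, if_pos (by omega), if_pos (by omega)]
  rw [key, Polynomial.eval₂_mul, PowerSeries.coeff_mul, PowerSeries.coeff_mul]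
  apply Finset.sum_congr rfl
  intro ab hab
  replace hab := Finset.HasAntidiagonal.mem_antidiagonal.mp hab
  rw [← coeff_comp_eq_eval₂_trunc hg f₁ (show ab.1 < n + 1 by omega),
    ← coeff_comp_eq_eval₂_trunc hg f₂ (show ab.2 < n + 1 by omega)]

lemma one_comp (g : PowerSeries K) : comp (1 : PowerSeries K) g = 1 := by
  ext n
  rw [coeff_comp, Finset.sum_eq_single 0]
  · simp
  · intro d _ hd0
    simp [PowerSeries.coeff_one, hd0]
  · intro h
    simp at h

lemma comp_X (f : PowerSeries K) : comp f X = f := by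
  ext n
  rw [coeff_comp, Finset.sum_eq_single n]
  · rw [coeff_X_pow, if_pos rfl, mul_one]
  · intro d _ hdn
    rw [coeff_X_pow, if_neg (fun h => hdn h.symm), mul_zero]
  · intro h
    simp at h

lemma X_comp {g : PowerSeries K} (hg : constantCoeff g = 0) : comp X g = g := by
  ext n
  rcases Nat.eq_zero_or_pos n with hn | hn
  · subst hn
    rw [coeff_comp]
    simp [PowerSeries.coeff_X, coeff_zero_eq_constantCoeff_apply, hg]
  · rw [coeff_comp, Finset.sum_eq_single 1]
    · rw [coeff_one_X, pow_one, one_mul]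
    · intro d _ hd1
      rw [PowerSeries.coeff_X, if_neg hd1, zero_mul]
    · intro h
      simp only [Finset.mem_range] at h
      omega

lemma constantCoeff_comp (f g : PowerSeries K) :
    constantCoeff (comp f g) = constantCoeff f := by
  rw [← coeff_zero_eq_constantCoeff_apply, coeff_comp]
  simp

lemma coeff_one_comp (f g : PowerSeries K) :
    coeff 1 (comp f g) = coeff 1 f * coeff 1 g := by
  rw [coeff_comp]
  have : Finset.range 2 = {0, 1} := rfl
  rw [this, Finset.sum_insert (by simp), Finset.sum_singleton, pow_zero, pow_one]
  simp [PowerSeries.coeff_one]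

lemma comp_assoc {g k : PowerSeries K} (hg : constantCoeff g = 0)
    (hk : constantCoeff k = 0) (f : PowerSeries K) :
    comp (comp f g) k = comp f (comp g k) := by
  have hpow : ∀ e : ℕ, (comp g k) ^ e = comp (g ^ e) k := by
    intro e
    induction e with
    | zero => simp [one_comp]
    | succ m ih => rw [pow_succ, pow_succ, ih, mul_comp hk]
  ext n
  rw [coeff_comp, coeff_comp]
  have L1 : ∀ d ∈ Finset.range (n + 1), coeff d (comp f g) * coeff n (k ^ d)
      = ∑ e ∈ Finset.range (n + 1), coeff e f * coeff d (g ^ e) * coeff n (k ^ d) := by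
    intro d hd
    simp only [Finset.mem_range] at hd
    rw [coeff_comp_of_lt hg f hd, Finset.sum_mul]
  rw [Finset.sum_congr rfl L1, Finset.sum_comm]
  apply Finset.sum_congr rfl
  intro e _
  rw [hpow e, coeff_comp, Finset.mul_sum]
  apply Finset.sum_congr rfl
  intro d _
  ring

/-- `h` belongs to `H^n(K)`: the coefficients in degrees `1,…,n-1` vanish
(the constant-coefficient-one condition being imposed separately). -/
def IsHn (n : ℕ) (f : PowerSeries K) : Prop := ∀ i, 0 < i → i < n → coeff i f = 0

/-- `g` belongs to `N^n(K)`: the coefficients in degrees `2,…,n` vanish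
(the conditions at degree `0`, `1` being imposed separately). -/
def IsNn (n : ℕ) (g : PowerSeries K) : Prop := ∀ j, 1 < j → j ≤ n → coeff j g = 0

/-- The group `H(K)` of power series with constant term `1`, as a subgroup of the
units of `K⟦X⟧`. -/
def Hgroup (K : Type*) [CommRing K] : Subgroup (PowerSeries K)ˣ where
  carrier := {u | constantCoeff (u : PowerSeries K) = 1}
  one_mem' := by simp
  mul_mem' := by
    intro a b ha hb
    simp only [Set.mem_setOf_eq, Units.val_mul, map_mul] at *
    rw [ha, hb, one_mul]
  inv_mem' := by
    intro a ha
    simp only [Set.mem_setOf_eq] at *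
    have h1 : constantCoeff ((a : PowerSeries K) * ((a⁻¹ : (PowerSeries K)ˣ) : PowerSeries K)) = 1 := by
      rw [Units.mul_inv, map_one]
    rw [map_mul, ha, one_mul] at h1
    exact h1


/-- The underlying power series of an element of `H(K)`. -/
def seriesOf {K : Type*} [CommRing K] (u : ↥(Hgroup K)) : PowerSeries K :=
  ((u : (PowerSeries K)ˣ) : PowerSeries K)

/- ## Auxiliary lemmas -/

lemma add_comp (f₁ f₂ g : PowerSeries K) :
    comp (f₁ + f₂) g = comp f₁ g + comp f₂ g := by
  ext n
  simp [coeff_comp, add_mul, Finset.sum_add_distrib]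

lemma X_pow_dvd_pow_sub {g : PowerSeries K} {m : ℕ}
    (h : (X : PowerSeries K) ^ m ∣ g - X) (d : ℕ) :
    (X : PowerSeries K) ^ m ∣ g ^ d - X ^ d := by
  induction d with
  | zero => simp
  | succ k ih =>
    have hkey : g ^ (k + 1) - X ^ (k + 1) = g ^ k * (g - X) + (g ^ k - X ^ k) * X := by ring
    rw [hkey]
    exact dvd_add (h.mul_left _) (ih.mul_right _)

lemma X_pow_dvd_comp_sub {g : PowerSeries K} {m : ℕ}
    (h : (X : PowerSeries K) ^ m ∣ g - X) (f : PowerSeries K) :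
    (X : PowerSeries K) ^ m ∣ comp f g - f := by
  rw [X_pow_dvd_iff]
  intro i hi
  have hf : coeff i f = coeff i (comp f X) := by rw [comp_X]
  rw [map_sub, hf, coeff_comp, coeff_comp, ← Finset.sum_sub_distrib]
  apply Finset.sum_eq_zero
  intro d _
  rw [← mul_sub, ← map_sub, (X_pow_dvd_iff.1 (X_pow_dvd_pow_sub h d)) i hi, mul_zero]

lemma isHn_iff (m : ℕ) {f : PowerSeries K} (hf : constantCoeff f = 1) :
    IsHn m f ↔ (X : PowerSeries K) ^ m ∣ f - 1 := by
  rw [X_pow_dvd_iff]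
  constructor
  · intro h i hi
    rcases Nat.eq_zero_or_pos i with h0 | h0
    · subst h0
      simp [coeff_zero_eq_constantCoeff_apply, hf]
    · rw [map_sub, h i h0 hi, PowerSeries.coeff_one, if_neg (by omega), sub_zero]
  · intro h i h0 hi
    have hh := h i hi
    rw [map_sub, PowerSeries.coeff_one, if_neg (by omega), sub_zero] at hh
    exact hh

lemma constantCoeff_seriesOf (u : ↥(Hgroup K)) : constantCoeff (seriesOf u) = 1 := u.2

lemma seriesOf_mul (a b : ↥(Hgroup K)) : seriesOf (a * b) = seriesOf a * seriesOf b := rfl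

lemma seriesOf_one : seriesOf (1 : ↥(Hgroup K)) = 1 := rfl

lemma seriesOf_mul_inv (u : ↥(Hgroup K)) : seriesOf u * seriesOf u⁻¹ = 1 := by
  have h : ((u⁻¹ : ↥(Hgroup K)) : (PowerSeries K)ˣ) = (u : (PowerSeries K)ˣ)⁻¹ := rfl
  unfold seriesOf
  rw [h, ← Units.val_mul]
  simp

/-- `H^m(K)` as a subgroup of `H(K)`. -/
def HmSub (K : Type*) [CommRing K] (m : ℕ) : Subgroup ↥(Hgroup K) where
  carrier := {u | IsHn m (seriesOf u)}
  one_mem' := by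
    rw [Set.mem_setOf_eq, seriesOf_one, isHn_iff m (by simp)]
    simp
  mul_mem' := by
    intro a b ha hb
    rw [Set.mem_setOf_eq, isHn_iff m (constantCoeff_seriesOf a)] at ha
    rw [Set.mem_setOf_eq, isHn_iff m (constantCoeff_seriesOf b)] at hb
    rw [Set.mem_setOf_eq, seriesOf_mul, isHn_iff m (by rw [map_mul,
      constantCoeff_seriesOf a, constantCoeff_seriesOf b, one_mul])]
    have hkey : seriesOf a * seriesOf b - 1
        = (seriesOf a - 1) * seriesOf b + (seriesOf b - 1) := by ring
    rw [hkey]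
    exact dvd_add (ha.mul_right _) hb
  inv_mem' := by
    intro a ha
    rw [Set.mem_setOf_eq, isHn_iff m (constantCoeff_seriesOf a)] at ha
    rw [Set.mem_setOf_eq, isHn_iff m (constantCoeff_seriesOf a⁻¹)]
    have hkey : seriesOf a⁻¹ - 1 = (1 - seriesOf a) * seriesOf a⁻¹ := by
      linear_combination seriesOf_mul_inv a
    rw [hkey]
    have h1 : (X : PowerSeries K) ^ m ∣ 1 - seriesOf a := by
      have hn : (1 : PowerSeries K) - seriesOf a = -(seriesOf a - 1) := by ring
      rw [hn]
      exact dvd_neg.mpr ha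
    exact h1.mul_right _

/-- for `m ≥ 2`, `H^m(K)` equals the subgroup of `H(K)` generated by
`{(h∘g)·h⁻¹ : g ∈ N^{m-1}(K), h ∈ H(K)}`, and also the subgroup generated by
`{((1+x)∘g)·(1+x)⁻¹ : g ∈ N^{m-1}(K)}`. -/
theorem Hm_eq_closure (K : Type*) [CommRing K] (m : ℕ) (hm : 2 ≤ m) :
    ((Subgroup.closure {u : ↥(Hgroup K) | ∃ g : PowerSeries K,
        constantCoeff g = 0 ∧ coeff 1 g = 1 ∧ IsNn (m - 1) g ∧
        ∃ v : ↥(Hgroup K), seriesOf u = comp (seriesOf v) g * seriesOf v⁻¹} :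
          Set ↥(Hgroup K))
      = {u : ↥(Hgroup K) | IsHn m (seriesOf u)}) ∧
    ((Subgroup.closure {u : ↥(Hgroup K) | ∃ g : PowerSeries K,
        constantCoeff g = 0 ∧ coeff 1 g = 1 ∧ IsNn (m - 1) g ∧
        ∃ v : ↥(Hgroup K), seriesOf v = 1 + X ∧
          seriesOf u = comp (seriesOf v) g * seriesOf v⁻¹} :
          Set ↥(Hgroup K))
      = {u : ↥(Hgroup K) | IsHn m (seriesOf u)}) := by
  set S₁ : Set ↥(Hgroup K) := {u : ↥(Hgroup K) | ∃ g : PowerSeries K,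
      constantCoeff g = 0 ∧ coeff 1 g = 1 ∧ IsNn (m - 1) g ∧
      ∃ v : ↥(Hgroup K), seriesOf u = comp (seriesOf v) g * seriesOf v⁻¹} with hS₁
  set S₂ : Set ↥(Hgroup K) := {u : ↥(Hgroup K) | ∃ g : PowerSeries K,
      constantCoeff g = 0 ∧ coeff 1 g = 1 ∧ IsNn (m - 1) g ∧
      ∃ v : ↥(Hgroup K), seriesOf v = 1 + X ∧
        seriesOf u = comp (seriesOf v) g * seriesOf v⁻¹} with hS₂
  -- S₂ ⊆ S₁
  have hS21 : S₂ ⊆ S₁ := by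
    rintro u ⟨g, hg0, hg1, hgN, v, _, huv⟩
    exact ⟨g, hg0, hg1, hgN, v, huv⟩
  -- S₁ ⊆ H^m
  have hS1H : S₁ ⊆ (HmSub K m : Set ↥(Hgroup K)) := by
    rintro u ⟨g, hg0, hg1, hgN, v, huv⟩
    show IsHn m (seriesOf u)
    rw [isHn_iff m (constantCoeff_seriesOf u), huv]
    have hgx : (X : PowerSeries K) ^ m ∣ g - X := by
      rw [X_pow_dvd_iff]
      intro i hi
      rw [map_sub, PowerSeries.coeff_X]
      rcases Nat.lt_or_ge i 2 with h2 | h2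
      · interval_cases i
        · simp [coeff_zero_eq_constantCoeff_apply, hg0]
        · rw [hg1, if_pos rfl, sub_self]
      · rw [hgN i (by omega) (by omega), if_neg (by omega), sub_zero]
    have hd : (X : PowerSeries K) ^ m ∣ comp (seriesOf v) g - seriesOf v :=
      X_pow_dvd_comp_sub hgx (seriesOf v)
    have hkey : comp (seriesOf v) g * seriesOf v⁻¹ - 1
        = (comp (seriesOf v) g - seriesOf v) * seriesOf v⁻¹ := by
      linear_combination seriesOf_mul_inv v
    rw [hkey]
    exact hd.mul_right _
  -- H^m ⊆ S₂
  have hHS2 : {u : ↥(Hgroup K) | IsHn m (seriesOf u)} ⊆ S₂ := by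
    intro u hu
    rw [Set.mem_setOf_eq, isHn_iff m (constantCoeff_seriesOf u)] at hu
    have hwd : (X : PowerSeries K) ^ m ∣ (seriesOf u - 1) * (1 + X) := hu.mul_right _
    have hwc : ∀ i, i < m → coeff i ((seriesOf u - 1) * (1 + X)) = 0 := X_pow_dvd_iff.1 hwd
    have hg0 : constantCoeff (X + (seriesOf u - 1) * (1 + X)) = 0 := by
      rw [map_add, constantCoeff_X, ← coeff_zero_eq_constantCoeff_apply,
        hwc 0 (by omega), add_zero]
    have hmul : ((1 + X : PowerSeries K)) * (PowerSeries.invOfUnit (1 + X) 1) = 1 :=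
      PowerSeries.mul_invOfUnit (1 + X) 1 (by simp)
    have hvmem : Units.mkOfMulEqOne (1 + X) (PowerSeries.invOfUnit (1 + X) 1) hmul ∈ Hgroup K := by
      show constantCoeff (1 + X : PowerSeries K) = 1
      simp
    obtain ⟨v, hsv⟩ : ∃ v : ↥(Hgroup K), seriesOf v = 1 + X :=
      ⟨⟨Units.mkOfMulEqOne (1 + X) (PowerSeries.invOfUnit (1 + X) 1) hmul, hvmem⟩, rfl⟩
    refine ⟨X + (seriesOf u - 1) * (1 + X), hg0, ?_, ?_, v, hsv, ?_⟩
    · rw [map_add, coeff_one_X, hwc 1 (by omega), add_zero]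
    · intro j hj1 hjm
      rw [map_add, PowerSeries.coeff_X, if_neg (by omega), hwc j (by omega), add_zero]
    · have hcomp : comp (seriesOf v) (X + (seriesOf u - 1) * (1 + X))
          = seriesOf u * seriesOf v := by
        rw [hsv, add_comp, one_comp, X_comp hg0]
        ring
      rw [hcomp, mul_assoc, seriesOf_mul_inv v, mul_one]
  -- assemble
  have h1 : (Subgroup.closure S₁ : Set ↥(Hgroup K)) ⊆ {u : ↥(Hgroup K) | IsHn m (seriesOf u)} :=
    (Subgroup.closure_le (HmSub K m)).2 hS1H
  have h2 : {u : ↥(Hgroup K) | IsHn m (seriesOf u)} ⊆ (Subgroup.closure S₂ : Set ↥(Hgroup K)) :=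
    fun u hu => Subgroup.subset_closure (hHS2 hu)
  have h3 : (Subgroup.closure S₂ : Set ↥(Hgroup K)) ⊆ (Subgroup.closure S₁ : Set ↥(Hgroup K)) :=
    Subgroup.closure_mono hS21
  constructor
  · exact Set.Subset.antisymm h1 (h2.trans h3)
  · exact Set.Subset.antisymm ((h3.trans h1)) h2

end RiordanPaper
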